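/- Let w ∈ S_n, let w₀ be the longest permutation, and let k be the maximal length of a subsequence (b₁,…,b_k) of a fixed reduced decomposition (a₁,…,a_{C(n,2)}) of w₀ such that s_{b₁}⋯s_{b_k} = w. Then k = C(n,2) − n + κ(w₀w), where κ denotes the number of cycles. -/

import Mathlib

/-- The adjacent transposition `s_{i+1} = (i+1, i+2)` of `Fin n` (0-based `i`). -/
def sgen (n i : ℕ) : Equiv.Perm (Fin n) :=
  if h : i + 1 < n then Equiv.swap ⟨i, Nat.lt_of_succ_lt h⟩ ⟨i + 1, h⟩ else 1

/-- The number of cycles of a permutation, counting fixed points. -/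
def kappa {n : ℕ} (u : Equiv.Perm (Fin n)) : ℕ :=
  u.cycleType.card + (n - u.support.card)

open Equiv Equiv.Perm

variable {n : ℕ}

/-- The same-cycle setoid. -/
def scSetoid (g : Perm (Fin n)) : Setoid (Fin n) :=
  ⟨g.SameCycle, ⟨SameCycle.refl g, fun h => h.symm, fun h h' => h.trans h'⟩⟩

open scoped Classical in
/-- classifying map: a point goes to itself if fixed, else to its cycle. -/
noncomputable def scF (g : Perm (Fin n)) (x : Fin n) :
    ({a : Fin n // g a = a} ⊕ {c : Perm (Fin n) // c ∈ g.cycleFactorsFinset}) :=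
  if h : g x = x then Sum.inl ⟨x, h⟩
  else Sum.inr ⟨g.cycleOf x, cycleOf_mem_cycleFactorsFinset_iff.mpr (mem_support.mpr h)⟩

theorem kappa_eq_card (g : Perm (Fin n)) :
    kappa g = Nat.card (Quotient (scSetoid g)) := by
  classical
  have hfix : ∀ {x y : Fin n}, g.SameCycle x y → g x = x → y = x := by
    rintro x y ⟨i, rfl⟩ hx
    exact zpow_apply_eq_self_of_apply_eq_self hx i
  have hwd : ∀ x y : Fin n, g.SameCycle x y → scF g x = scF g y := by
    intro x y hxy
    by_cases hx : g x = x
    · obtain rfl := hfix hxy hx; rfl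
    · have hy : g y ≠ y := fun hy => hx (by rw [hfix hxy.symm hy]; exact hy)
      simp only [scF, dif_neg hx, dif_neg hy]
      exact congrArg _ (Subtype.ext hxy.cycleOf_eq)
  let F : Quotient (scSetoid g) →
      ({a : Fin n // g a = a} ⊕ {c : Perm (Fin n) // c ∈ g.cycleFactorsFinset}) :=
    Quotient.lift (scF g) hwd
  have hbij : Function.Bijective F := by
    constructor
    · intro a b
      induction a using Quotient.ind
      induction b using Quotient.ind
      rename_i x y
      intro hF
      have hF2 : scF g x = scF g y := hF
      refine Quotient.sound (?_ : g.SameCycle x y)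
      by_cases hx : g x = x <;> by_cases hy : g y = y
      · simp only [scF, dif_pos hx, dif_pos hy] at hF2
        obtain rfl : x = y := congrArg Subtype.val (Sum.inl.inj hF2)
        exact SameCycle.refl g x
      · simp [scF, dif_pos hx, dif_neg hy] at hF2
      · simp [scF, dif_neg hx, dif_pos hy] at hF2
      · simp only [scF, dif_neg hx, dif_neg hy] at hF2
        have hc : g.cycleOf x = g.cycleOf y := congrArg Subtype.val (Sum.inr.inj hF2)
        have hy' : y ∈ (g.cycleOf y).support :=
          mem_support.mpr (by rwa [cycleOf_apply_self])
        rw [← hc, mem_support_cycleOf_iff] at hy'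
        exact hy'.1
    · rintro (⟨x, hx⟩ | ⟨c, hc⟩)
      · exact ⟨Quotient.mk _ x, by show scF g x = _; simp [scF, hx]⟩
      · have hc' := (mem_cycleFactorsFinset_iff).mp hc
        obtain ⟨x, hx, -⟩ := hc'.1
        have hgx : g x = c x := (hc'.2 x (mem_support.mpr hx)).symm
        refine ⟨Quotient.mk _ x, ?_⟩
        have hgxx : g x ≠ x := by rw [hgx]; exact hx
        show scF g x = _
        simp only [scF, dif_neg hgxx]
        congr 1
        exact Subtype.ext (cycle_is_cycleOf (mem_support.mpr hx) hc).symm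
  have hcard := Nat.card_eq_of_bijective F hbij
  rw [kappa, hcard, Nat.card_sum]
  have h1 : Nat.card {a : Fin n // g a = a} = n - g.support.card := by
    rw [Nat.card_eq_fintype_card, Fintype.card_subtype]
    have hs : g.support = Finset.univ.filter (fun x => ¬ g x = x) := by
      ext x; simp [mem_support]
    have := Finset.card_filter_add_card_filter_not
      (s := (Finset.univ : Finset (Fin n))) (p := fun x => g x = x)
    rw [hs]
    simp only [Finset.card_univ, Fintype.card_fin] at this ⊢
    omega
  have h2 : Nat.card {c : Perm (Fin n) // c ∈ g.cycleFactorsFinset}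
      = g.cycleType.card := by
    rw [Nat.card_eq_fintype_card, Fintype.card_coe, cycleType]
    simp
  omega

/-- The orbit equivalence of the subgroup generated by `g` and `t`. -/
def clSetoid (g t : Perm (Fin n)) : Setoid (Fin n) :=
  ⟨fun x y => ∃ h ∈ Subgroup.closure ({g, t} : Set (Perm (Fin n))), h x = y,
    ⟨fun x => ⟨1, one_mem _, rfl⟩,
     fun ⟨h, hh, hxy⟩ => ⟨h⁻¹, inv_mem hh, by rw [← hxy]; exact h.symm_apply_apply _⟩,
     fun ⟨h₁, hh₁, h1⟩ ⟨h₂, hh₂, h2⟩ =>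
       ⟨h₂ * h₁, mul_mem hh₂ hh₁, by rw [mul_apply, h1, h2]⟩⟩⟩

theorem cl_invariant {g t : Perm (Fin n)} (O : Set (Fin n))
    (hg : ∀ z ∈ O, g z ∈ O) (hg' : ∀ z ∈ O, g⁻¹ z ∈ O)
    (ht : ∀ z ∈ O, t z ∈ O) (ht' : ∀ z ∈ O, t⁻¹ z ∈ O) :
    ∀ h ∈ Subgroup.closure ({g, t} : Set (Perm (Fin n))), ∀ z ∈ O, h z ∈ O := by
  intro h hh
  refine (Subgroup.closure_induction
    (p := fun h _ => (∀ z ∈ O, h z ∈ O) ∧ (∀ z ∈ O, h⁻¹ z ∈ O)) ?_ ?_ ?_ ?_ hh).1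
  · rintro x (rfl | rfl)
    · exact ⟨hg, hg'⟩
    · exact ⟨ht, ht'⟩
  · exact ⟨fun z hz => hz, fun z hz => hz⟩
  · rintro a b _ _ ⟨ha, ha'⟩ ⟨hb, hb'⟩
    exact ⟨fun z hz => by rw [mul_apply]; exact ha _ (hb _ hz),
           fun z hz => by rw [mul_inv_rev, mul_apply]; exact hb' _ (ha' _ hz)⟩
  · rintro a _ ⟨ha, ha'⟩
    exact ⟨ha', by simpa using ha⟩

theorem sc_to_cl {g t : Perm (Fin n)} {x y : Fin n} (h : g.SameCycle x y) :
    (clSetoid g t).r x y := by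
  obtain ⟨i, hi⟩ := h
  exact ⟨g ^ i, (Subgroup.closure _).zpow_mem
    (Subgroup.subset_closure (Set.mem_insert _ _)) i, hi⟩

/-- Core fiber analysis: two points related by the big group are same-cycle,
or both belong to the cycles of `p` or `q`. -/
theorem cl_fiber {g : Perm (Fin n)} {p q : Fin n}
    {x y : Fin n} (hxy : (clSetoid g (Equiv.swap p q)).r x y) :
    g.SameCycle x y ∨
      ((g.SameCycle p x ∨ g.SameCycle q x) ∧ (g.SameCycle p y ∨ g.SameCycle q y)) := by
  set t := Equiv.swap p q with ht
  by_cases hp : (clSetoid g t).r x p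
  · right
    have hO₂ : ∀ h ∈ Subgroup.closure ({g, t} : Set (Perm (Fin n))),
        ∀ z ∈ {z | g.SameCycle p z ∨ g.SameCycle q z}, h z ∈ {z | g.SameCycle p z ∨ g.SameCycle q z} := by
      refine cl_invariant _ ?_ ?_ ?_ ?_
      · rintro z (hz | hz)
        · exact Or.inl (sameCycle_apply_right.mpr hz)
        · exact Or.inr (sameCycle_apply_right.mpr hz)
      · rintro z (hz | hz)
        · exact Or.inl (sameCycle_symm_apply_right.mpr hz)
        · exact Or.inr (sameCycle_symm_apply_right.mpr hz)
      · intro z hz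
        by_cases hzp : z = p
        · subst hzp; rw [ht, swap_apply_left]; exact Or.inr (SameCycle.refl _ _)
        by_cases hzq : z = q
        · subst hzq; rw [ht, swap_apply_right]; exact Or.inl (SameCycle.refl _ _)
        · rwa [ht, swap_apply_of_ne_of_ne hzp hzq]
      · intro z hz
        rw [ht, swap_inv]
        by_cases hzp : z = p
        · subst hzp; rw [swap_apply_left]; exact Or.inr (SameCycle.refl _ _)
        by_cases hzq : z = q
        · subst hzq; rw [swap_apply_right]; exact Or.inl (SameCycle.refl _ _)
        · rwa [swap_apply_of_ne_of_ne hzp hzq]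
    have hpmem : p ∈ {z | g.SameCycle p z ∨ g.SameCycle q z} :=
      Or.inl (SameCycle.refl _ _)
    have hx : x ∈ {z | g.SameCycle p z ∨ g.SameCycle q z} := by
      obtain ⟨h, hh, hpx⟩ := (clSetoid g t).iseqv.symm hp
      exact hpx ▸ hO₂ h hh p hpmem
    have hy : y ∈ {z | g.SameCycle p z ∨ g.SameCycle q z} := by
      obtain ⟨h, hh, hpy⟩ := (clSetoid g t).iseqv.trans ((clSetoid g t).iseqv.symm hp) hxy
      exact hpy ▸ hO₂ h hh p hpmem
    exact ⟨hx, hy⟩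
  · left
    have hO : ∀ h ∈ Subgroup.closure ({g, t} : Set (Perm (Fin n))),
        ∀ z ∈ {z | g.SameCycle x z}, h z ∈ {z | g.SameCycle x z} := by
      have hpO : p ∉ {z | g.SameCycle x z} := fun hc => hp (sc_to_cl hc)
      have hqO : q ∉ {z | g.SameCycle x z} := by
        intro hc
        refine hp ((clSetoid g t).iseqv.trans (sc_to_cl hc) ?_)
        exact ⟨t, Subgroup.subset_closure (Or.inr rfl), swap_apply_right p q⟩
      refine cl_invariant _ ?_ ?_ ?_ ?_
      · exact fun z hz => sameCycle_apply_right.mpr hz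
      · exact fun z hz => sameCycle_symm_apply_right.mpr hz
      · intro z hz
        rwa [ht, swap_apply_of_ne_of_ne (ne_of_mem_of_not_mem hz hpO)
          (ne_of_mem_of_not_mem hz hqO)]
      · intro z hz
        rw [ht, swap_inv]
        rwa [swap_apply_of_ne_of_ne (ne_of_mem_of_not_mem hz hpO)
          (ne_of_mem_of_not_mem hz hqO)]
    obtain ⟨h, hh, hxy'⟩ := hxy
    exact hxy' ▸ hO h hh x (SameCycle.refl _ _)

instance (s : Setoid (Fin n)) : Finite (Quotient s) :=
  Finite.of_surjective (Quotient.mk s) Quotient.mk_surjective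

/-- counting with one allowed collision -/
theorem card_le_card_add_one {A B : Type*} [Finite A] [Finite B] (f : A → B) (a₀ : A)
    (hf : ∀ a a', f a = f a' → a = a' ∨ a = a₀ ∨ a' = a₀) :
    Nat.card A ≤ Nat.card B + 1 := by
  classical
  have hinj : Function.Injective (fun a : {a : A // ¬ a = a₀} => f a.1) := by
    rintro ⟨a, ha⟩ ⟨a', ha'⟩ h
    rcases hf a a' h with h | h | h
    · exact Subtype.ext h
    · exact absurd h ha
    · exact absurd h ha'
  have h1 : Nat.card {a : A // ¬ a = a₀} ≤ Nat.card B :=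
    Nat.card_le_card_of_injective _ hinj
  cases nonempty_fintype A
  cases nonempty_fintype B
  have hcompl := Fintype.card_subtype_compl (p := fun a : A => a = a₀)
  simp only [Fintype.card_subtype_eq] at hcompl
  have hle := Fintype.card_le_of_injective (fun a : {a : A // ¬ a = a₀} => a.1)
    (fun a b h => Subtype.ext h)
  simp only [Nat.card_eq_fintype_card] at h1 ⊢
  omega

theorem kappa_merge (g : Perm (Fin n)) {p q : Fin n} (hpq : p ≠ q) :
    kappa g ≤ kappa (Equiv.swap p q * g) + 1 := by
  set t := Equiv.swap p q with ht
  set g' := t * g with hg'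
  -- maps to the common quotient
  have hψwd : ∀ x y : Fin n, (scSetoid g).r x y → (clSetoid g t).r x y := fun x y h => sc_to_cl h
  have hψ'wd : ∀ x y : Fin n, (scSetoid g').r x y → (clSetoid g t).r x y := by
    intro x y hxy
    obtain ⟨i, hi⟩ := hxy
    have hmem : g' ∈ Subgroup.closure ({g, t} : Set (Perm (Fin n))) :=
      mul_mem (Subgroup.subset_closure (Set.mem_insert_of_mem _ rfl))
        (Subgroup.subset_closure (Set.mem_insert _ _))
    exact ⟨g' ^ i, (Subgroup.closure _).zpow_mem hmem i, hi⟩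
  let ψ : Quotient (scSetoid g) → Quotient (clSetoid g t) := Quotient.map' id hψwd
  let ψ' : Quotient (scSetoid g') → Quotient (clSetoid g t) := Quotient.map' id hψ'wd
  have hψ'surj : Function.Surjective ψ' := by
    intro b
    induction b using Quotient.ind
    rename_i z
    exact ⟨Quotient.mk _ z, rfl⟩
  have hcol : ∀ A B, ψ A = ψ B → A = B ∨ A = Quotient.mk _ q ∨ B = Quotient.mk _ q := by
    intro A B
    induction A using Quotient.ind
    induction B using Quotient.ind
    rename_i x y
    intro hAB
    have hxy : (clSetoid g t).r x y := Quotient.exact' hAB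
    rcases cl_fiber hxy with h | ⟨hx, hy⟩
    · exact Or.inl (Quotient.sound h)
    · rcases hx with hx | hx
      · rcases hy with hy | hy
        · exact Or.inl (Quotient.sound (hx.symm.trans hy))
        · exact Or.inr (Or.inr (Quotient.sound hy.symm))
      · exact Or.inr (Or.inl (Quotient.sound hx.symm))
  rw [kappa_eq_card g, kappa_eq_card g']
  have h1 : Nat.card (Quotient (scSetoid g)) ≤ Nat.card (Quotient (clSetoid g t)) + 1 :=
    card_le_card_add_one ψ (Quotient.mk _ q) hcol
  have h2 : Nat.card (Quotient (clSetoid g t)) ≤ Nat.card (Quotient (scSetoid g')) :=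
    Nat.card_le_card_of_surjective ψ' hψ'surj
  omega

theorem kappa_split (g : Perm (Fin n)) {p q : Fin n} (hpq : p ≠ q)
    (hsc : g.SameCycle p q) :
    kappa g + 1 ≤ kappa (Equiv.swap p q * g) := by
  set t := Equiv.swap p q with ht
  set g' := t * g with hg'
  have hψwd : ∀ x y : Fin n, (scSetoid g).r x y → (clSetoid g t).r x y := fun x y h => sc_to_cl h
  have hψ'wd : ∀ x y : Fin n, (scSetoid g').r x y → (clSetoid g t).r x y := by
    intro x y hxy
    obtain ⟨i, hi⟩ := hxy
    have hmem : g' ∈ Subgroup.closure ({g, t} : Set (Perm (Fin n))) :=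
      mul_mem (Subgroup.subset_closure (Set.mem_insert_of_mem _ rfl))
        (Subgroup.subset_closure (Set.mem_insert _ _))
    exact ⟨g' ^ i, (Subgroup.closure _).zpow_mem hmem i, hi⟩
  let ψ : Quotient (scSetoid g) → Quotient (clSetoid g t) := Quotient.map' id hψwd
  let ψ' : Quotient (scSetoid g') → Quotient (clSetoid g t) := Quotient.map' id hψ'wd
  have hψ'surj : Function.Surjective ψ' := by
    intro b
    induction b using Quotient.ind
    rename_i z
    exact ⟨Quotient.mk _ z, rfl⟩
  have hψinj : Function.Injective ψ := by
    intro A B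
    induction A using Quotient.ind
    induction B using Quotient.ind
    rename_i x y
    intro hAB
    have hxy : (clSetoid g t).r x y := Quotient.exact' hAB
    refine Quotient.sound ?_
    rcases cl_fiber hxy with h | ⟨hx, hy⟩
    · exact h
    · have hx' : g.SameCycle p x := by
        rcases hx with hx | hx
        · exact hx
        · exact hsc.trans hx
      have hy' : g.SameCycle p y := by
        rcases hy with hy | hy
        · exact hy
        · exact hsc.trans hy
      exact hx'.symm.trans hy'
  -- parity
  have hparity : kappa g ≠ kappa g' := by
    have key : ∀ u : Perm (Fin n), ((-1 : ℤˣ) ^ kappa u) * sign u = (-1) ^ n := by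
      intro u
      have hsum := sum_cycleType u
      have hsupp : u.support.card ≤ n := by
        simpa using Finset.card_le_univ u.support
      rw [sign_of_cycleType, ← pow_add, hsum]
      have h3 : kappa u + (u.support.card + Multiset.card u.cycleType)
          = n + 2 * Multiset.card u.cycleType := by
        rw [kappa]; omega
      rw [h3, pow_add, pow_mul]
      simp
    intro hk
    have h1 := key g
    have h2 := key g'
    rw [show g' = Equiv.swap p q * g from rfl, Perm.sign_mul, sign_swap hpq, ← hk] at h2
    rw [← h2] at h1
    have hss : sign g = -1 * sign g := mul_left_cancel h1
    rw [neg_one_mul] at hss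
    rcases Int.units_eq_one_or (sign g) with h | h <;> rw [h] at hss <;> exact absurd hss (by decide)
  have h1 : Nat.card (Quotient (scSetoid g)) ≤ Nat.card (Quotient (scSetoid g')) :=
    le_trans (Nat.card_le_card_of_injective ψ hψinj)
      (Nat.card_le_card_of_surjective ψ' hψ'surj)
  rw [kappa_eq_card g, kappa_eq_card g'] at *
  omega

theorem kappa_one : kappa (1 : Equiv.Perm (Fin n)) = n := by
  simp [kappa]

theorem kappa_inv (g : Perm (Fin n)) : kappa g⁻¹ = kappa g := by
  simp [kappa, cycleType_inv, support_inv]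

theorem kappa_le (g : Perm (Fin n)) : kappa g ≤ n := by
  have h1 : Multiset.card g.cycleType • 1 ≤ g.cycleType.sum :=
    Multiset.card_nsmul_le_sum (fun x hx => one_le_two.trans (two_le_of_mem_cycleType hx))
  have h2 := sum_cycleType g
  have h3 : g.support.card ≤ n := by simpa using Finset.card_le_univ g.support
  simp only [smul_eq_mul, mul_one] at h1
  rw [kappa]; omega

theorem kappa_lt_of_ne_one {g : Perm (Fin n)} (hg : g ≠ 1) : kappa g < n := by
  have h1 : Multiset.card g.cycleType • 2 ≤ g.cycleType.sum :=
    Multiset.card_nsmul_le_sum (fun x hx => two_le_of_mem_cycleType hx)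
  have h2 := sum_cycleType g
  have h3 : g.support.card ≤ n := by simpa using Finset.card_le_univ g.support
  have h4 : 0 < Multiset.card g.cycleType := card_cycleType_pos.mpr hg
  simp only [smul_eq_mul] at h1
  rw [kappa]; omega

theorem kappa_split_right (g : Perm (Fin n)) {p q : Fin n} (hpq : p ≠ q)
    (hsc : g.SameCycle p q) : kappa g + 1 ≤ kappa (g * Equiv.swap p q) := by
  have h1 : kappa (g * Equiv.swap p q) = kappa (Equiv.swap p q * g⁻¹) := by
    rw [← kappa_inv (g * Equiv.swap p q), mul_inv_rev, swap_inv]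
  rw [h1, ← kappa_inv g]
  exact kappa_split g⁻¹ hpq (sameCycle_inv.mpr hsc)

/-- existence of an inversion within a cycle, via the maximum of the cycle -/
theorem exists_inversion {g : Perm (Fin n)} (hg : g ≠ 1) :
    ∃ p q : Fin n, p < q ∧ g q < g p ∧ g.SameCycle p q := by
  classical
  have : ∃ x : Fin n, g x ≠ x := by
    by_contra h
    push_neg at h
    exact hg (Equiv.ext h)
  obtain ⟨x₀, hx₀⟩ := this
  set S := (g.cycleOf x₀).support with hS
  have hx₀S : x₀ ∈ S := mem_support_cycleOf_iff.mpr ⟨SameCycle.refl g x₀, mem_support.mpr hx₀⟩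
  have hmemS : ∀ {z : Fin n}, z ∈ S ↔ g.SameCycle x₀ z ∧ x₀ ∈ g.support := fun {z} =>
    mem_support_cycleOf_iff
  set m := S.max' ⟨x₀, hx₀S⟩ with hm
  have hmS : m ∈ S := S.max'_mem _
  have hmsc : g.SameCycle x₀ m := (hmemS.mp hmS).1
  have hgm : g m ≠ m := by
    have := support_cycleOf_le g x₀ hmS
    exact mem_support.mp this
  have hgmS : g m ∈ S := hmemS.mpr ⟨hmsc.trans (sameCycle_apply_right.mpr (SameCycle.refl g m)),
    mem_support.mpr hx₀⟩
  have hgmlt : g m < m := lt_of_le_of_ne (S.le_max' _ hgmS) hgm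
  have hpsc : g.SameCycle x₀ (g⁻¹ m) := hmsc.trans (sameCycle_symm_apply_right.mpr
      (SameCycle.refl g m))
  have hpS : g⁻¹ m ∈ S := hmemS.mpr ⟨hpsc, mem_support.mpr hx₀⟩
  refine ⟨g⁻¹ m, m, ?_, ?_, ?_⟩
  · have hne : g⁻¹ m ≠ m := by
      intro h
      apply hgm
      conv_lhs => rw [← h]
      exact g.apply_symm_apply m
    exact lt_of_le_of_ne (S.le_max' _ hpS) hne
  · rw [show g (g⁻¹ m) = m from g.apply_symm_apply m]
    exact hgmlt
  · exact hpsc.symm.trans hmsc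

/-- product of a list of transpositions -/
def swapProd {n : ℕ} (P : List (Fin n × Fin n)) : Equiv.Perm (Fin n) :=
  (P.map (fun e => Equiv.swap e.1 e.2)).prod

@[simp] theorem swapProd_nil : swapProd ([] : List (Fin n × Fin n)) = 1 := rfl

@[simp] theorem swapProd_append (P Q : List (Fin n × Fin n)) :
    swapProd (P ++ Q) = swapProd P * swapProd Q := by
  simp [swapProd]

@[simp] theorem swapProd_cons (e : Fin n × Fin n) (P : List (Fin n × Fin n)) :
    swapProd (e :: P) = Equiv.swap e.1 e.2 * swapProd P := by
  simp [swapProd]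

/-- A factorization of `x` into at most `n - kappa x` transpositions such that each
transposition is an inversion of the corresponding prefix product. -/
theorem exists_good_factorization : ∀ (k : ℕ) (x : Perm (Fin n)), n - kappa x ≤ k →
    ∃ P : List (Fin n × Fin n),
      swapProd P = x ∧ P.length + kappa x ≤ n ∧
      ∀ j (hj : j < P.length), (P.get ⟨j, hj⟩).1 < (P.get ⟨j, hj⟩).2 ∧
        (swapProd (P.take j)) (P.get ⟨j, hj⟩).1 < (swapProd (P.take j)) (P.get ⟨j, hj⟩).2 := by
  intro k
  induction k with
  | zero =>
    intro x hx
    have hx1 : x = 1 := by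
      by_contra h
      have := kappa_lt_of_ne_one h
      omega
    subst hx1
    exact ⟨[], rfl, by simp [kappa_one], fun j hj => absurd hj (by simp)⟩
  | succ k ih =>
    intro x hx
    by_cases hx1 : x = 1
    · subst hx1
      exact ⟨[], rfl, by simp [kappa_one], fun j hj => absurd hj (by simp)⟩
    · obtain ⟨p, q, hpq, hinv, hsc⟩ := exists_inversion hx1
      have hsplit := kappa_split_right x (ne_of_lt hpq) hsc
      have hklt := kappa_lt_of_ne_one hx1
      have hkle := kappa_le (x * Equiv.swap p q)
      obtain ⟨P', hP'prod, hP'len, hP'inv⟩ := ih (x * Equiv.swap p q) (by omega)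
      refine ⟨P' ++ [(p, q)], ?_, ?_, ?_⟩
      · rw [swapProd_append, hP'prod]
        simp [mul_assoc]
      · simp only [List.length_append, List.length_singleton]
        omega
      · intro j hj
        have hj' : j < P'.length + 1 := by simpa using hj
        by_cases hjlt : j < P'.length
        · have hget : (P' ++ [(p, q)]).get ⟨j, hj⟩ = P'.get ⟨j, hjlt⟩ :=
            by simp [List.getElem_append_left hjlt]
          have h0 : j - P'.length = 0 := by omega
          have htake : (P' ++ [(p, q)]).take j = P'.take j := by
            rw [List.take_append, h0, List.take_zero, List.append_nil]
          rw [hget, htake]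
          exact hP'inv j hjlt
        · have hjeq : j = P'.length := by omega
          subst hjeq
          have hget : (P' ++ [(p, q)]).get ⟨P'.length, hj⟩ = (p, q) := by
            simp
          have htake : (P' ++ [(p, q)]).take P'.length = P' := by
            rw [List.take_append, List.take_length, Nat.sub_self,
              List.take_zero, List.append_nil]
          rw [hget, htake, hP'prod]
          refine ⟨hpq, ?_⟩
          simp only [mul_apply, swap_apply_left, swap_apply_right]
          exact hinv

/-- relative order flip under an adjacent transposition pins down the pair. -/
theorem swap_flip {k : ℕ} (hk : k + 1 < n) {x y : Fin n} (hxy : x < y)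
    (hflip : (Equiv.swap (⟨k, Nat.lt_of_succ_lt hk⟩ : Fin n) ⟨k + 1, hk⟩) y
      < (Equiv.swap (⟨k, Nat.lt_of_succ_lt hk⟩ : Fin n) ⟨k + 1, hk⟩) x) :
    x = (⟨k, Nat.lt_of_succ_lt hk⟩ : Fin n) ∧ y = (⟨k + 1, hk⟩ : Fin n) := by
  have swap_val : ∀ z : Fin n, ((Equiv.swap (⟨k, Nat.lt_of_succ_lt hk⟩ : Fin n) ⟨k + 1, hk⟩) z).1 =
      if z.1 = k then k + 1 else if z.1 = k + 1 then k else z.1 := by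
    intro z
    by_cases h1 : z.1 = k
    · have hz : z = (⟨k, Nat.lt_of_succ_lt hk⟩ : Fin n) := Fin.ext h1
      subst hz
      simp
    by_cases h2 : z.1 = k + 1
    · have hz : z = (⟨k + 1, hk⟩ : Fin n) := Fin.ext h2
      subst hz
      simp
    · rw [swap_apply_of_ne_of_ne (fun hc => h1 (by rw [hc])) (fun hc => h2 (by rw [hc])),
        if_neg h1, if_neg h2]
  have hflip' : ((Equiv.swap (⟨k, Nat.lt_of_succ_lt hk⟩ : Fin n) ⟨k + 1, hk⟩) y).1
      < ((Equiv.swap (⟨k, Nat.lt_of_succ_lt hk⟩ : Fin n) ⟨k + 1, hk⟩) x).1 := hflip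
  rw [swap_val x, swap_val y] at hflip'
  have hxy' : x.1 < y.1 := hxy
  refine ⟨Fin.ext ?_, Fin.ext ?_⟩
  · show x.1 = k
    split_ifs at hflip' <;> omega
  · show y.1 = k + 1
    split_ifs at hflip' <;> omega

/-- The strong exchange property for words in the adjacent transpositions. -/
theorem exchange : ∀ (b : List ℕ), (∀ i ∈ b, i + 1 < n) →
    ∀ p q : Fin n, p < q →
    ((b.map (sgen n)).prod) q < ((b.map (sgen n)).prod) p →
    ∃ c : List ℕ, c.Sublist b ∧ c.length + 1 = b.length ∧
      (c.map (sgen n)).prod = (b.map (sgen n)).prod * Equiv.swap p q := by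
  intro b
  induction b with
  | nil =>
    intro _ p q hpq h
    simp only [List.map_nil, List.prod_nil, one_apply] at h
    exact absurd (h.trans hpq) (lt_irrefl _)
  | cons i b ih =>
    intro hvalid p q hpq h
    have hi : i + 1 < n := hvalid i List.mem_cons_self
    have hvalid' : ∀ j ∈ b, j + 1 < n := fun j hj => hvalid j (List.mem_cons_of_mem i hj)
    rw [List.map_cons, List.prod_cons] at h
    by_cases hcase : ((b.map (sgen n)).prod) q < ((b.map (sgen n)).prod) p
    · obtain ⟨c', hsub, hlen, hprod⟩ := ih hvalid' p q hpq hcase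
      refine ⟨i :: c', hsub.cons₂ i, by simpa using hlen, ?_⟩
      rw [List.map_cons, List.prod_cons, List.map_cons, List.prod_cons, mul_assoc, hprod]
    · have hne : ((b.map (sgen n)).prod) p ≠ ((b.map (sgen n)).prod) q :=
        fun hc => (ne_of_lt hpq) (Equiv.injective _ hc)
      have hlt : ((b.map (sgen n)).prod) p < ((b.map (sgen n)).prod) q :=
        lt_of_le_of_ne (not_lt.mp hcase) hne
      have hsgen : sgen n i = Equiv.swap (⟨i, Nat.lt_of_succ_lt hi⟩ : Fin n) ⟨i + 1, hi⟩ :=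
        dif_pos hi
      rw [hsgen] at h
      simp only [mul_apply] at h
      obtain ⟨hp', hq'⟩ := swap_flip hi hlt h
      have hkey : sgen n i = (b.map (sgen n)).prod * Equiv.swap p q * ((b.map (sgen n)).prod)⁻¹ := by
        rw [hsgen, ← hp', ← hq']
        exact swap_apply_apply _ p q
      refine ⟨b, List.sublist_cons_self i b, by simp, ?_⟩
      rw [List.map_cons, List.prod_cons, hkey]
      simp [mul_assoc, swap_mul_self]

/-- deleting letters one at a time along a good factorization -/
theorem subword_lemma : ∀ (L : List (Fin n × Fin n)) (b : List ℕ), (∀ i ∈ b, i + 1 < n) →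
    (∀ j (hj : j < L.length), (L.get ⟨j, hj⟩).1 < (L.get ⟨j, hj⟩).2 ∧
      ((b.map (sgen n)).prod * swapProd (L.take j)) (L.get ⟨j, hj⟩).2 <
      ((b.map (sgen n)).prod * swapProd (L.take j)) (L.get ⟨j, hj⟩).1) →
    ∃ c : List ℕ, c.Sublist b ∧ c.length + L.length = b.length ∧
      (c.map (sgen n)).prod = (b.map (sgen n)).prod * swapProd L := by
  intro L
  induction L with
  | nil => exact fun b _ _ => ⟨b, List.Sublist.refl b, by simp, by simp⟩
  | cons e L ih =>
    intro b hvalid H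
    obtain ⟨h0lt, h0⟩ := H 0 (by simp)
    simp only [List.take_zero, swapProd_nil, mul_one, List.get] at h0 h0lt
    obtain ⟨c₁, hsub₁, hlen₁, hprod₁⟩ := exchange b hvalid e.1 e.2 h0lt h0
    have hvalid₁ : ∀ i ∈ c₁, i + 1 < n := fun i hi => hvalid i (hsub₁.subset hi)
    have H' : ∀ j (hj : j < L.length), (L.get ⟨j, hj⟩).1 < (L.get ⟨j, hj⟩).2 ∧
        ((c₁.map (sgen n)).prod * swapProd (L.take j)) (L.get ⟨j, hj⟩).2 <
        ((c₁.map (sgen n)).prod * swapProd (L.take j)) (L.get ⟨j, hj⟩).1 := by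
      intro j hj
      have := H (j + 1) (by simpa using Nat.succ_lt_succ hj)
      simpa [hprod₁, List.take_succ_cons, mul_assoc] using this
    obtain ⟨c, hsub, hlen, hprod⟩ := ih c₁ hvalid₁ H'
    refine ⟨c, hsub.trans hsub₁, ?_, ?_⟩
    · simp only [List.length_cons]
      omega
    · rw [hprod, hprod₁, swapProd_cons, mul_assoc]

/-- the deletion bound: a subword differs from the word by at least the
reflection length of the quotient. -/
theorem del_bound : ∀ {b c : List ℕ}, c.Sublist b → (∀ i ∈ b, i + 1 < n) →
    n - kappa (((c.map (sgen n)).prod)⁻¹ * (b.map (sgen n)).prod) + c.length ≤ b.length := by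
  intro b c hsub
  induction hsub with
  | slnil => simp [kappa_one]
  | @cons c b i hsub ih =>
    intro hvalid
    have hi : i + 1 < n := hvalid i List.mem_cons_self
    have hvalid' : ∀ j ∈ b, j + 1 < n := fun j hj => hvalid j (List.mem_cons_of_mem i hj)
    have ihb := ih hvalid'
    set u := (c.map (sgen n)).prod with hu
    set v := (b.map (sgen n)).prod with hv
    have hsgen : sgen n i = Equiv.swap (⟨i, Nat.lt_of_succ_lt hi⟩ : Fin n) ⟨i + 1, hi⟩ :=
      dif_pos hi
    have hrw : u⁻¹ * ((i :: b).map (sgen n)).prod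
        = Equiv.swap (u⁻¹ ⟨i, Nat.lt_of_succ_lt hi⟩) (u⁻¹ ⟨i + 1, hi⟩) * (u⁻¹ * v) := by
      rw [List.map_cons, List.prod_cons, swap_apply_apply, hsgen]
      simp [mul_assoc, hv]
    have hmerge := kappa_merge (u⁻¹ * v)
      (p := u⁻¹ ⟨i, Nat.lt_of_succ_lt hi⟩) (q := u⁻¹ ⟨i + 1, hi⟩)
      (fun hc => (by omega : ¬ i = i + 1) (by
        have := Equiv.injective u⁻¹ hc
        exact congrArg Fin.val this))
    rw [hrw]
    simp only [List.length_cons]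
    omega
  | @cons_cons c b i hsub ih =>
    intro hvalid
    have hvalid' : ∀ j ∈ b, j + 1 < n := fun j hj => hvalid j (List.mem_cons_of_mem i hj)
    have ihb := ih hvalid'
    have hrw : ((i :: c).map (sgen n)).prod⁻¹ * ((i :: b).map (sgen n)).prod
        = ((c.map (sgen n)).prod)⁻¹ * (b.map (sgen n)).prod := by
      rw [List.map_cons, List.prod_cons, List.map_cons, List.prod_cons, mul_inv_rev]
      simp [mul_assoc]
    rw [hrw]
    simp only [List.length_cons]
    omega

/-- Let `w ∈ S_n`, let `w₀` be the longest permutation, and let `k` be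
the maximal length of a subsequence `(b₁,…,b_k)` of a fixed reduced decomposition
`(a₁,…,a_{C(n,2)})` of `w₀` with `s_{b₁}⋯s_{b_k} = w`.  Then
`k = C(n,2) − (n − κ(w₀w))`. -/
theorem stmt17 (n : ℕ) (w : Equiv.Perm (Fin n)) (a : List ℕ)
    (ha_rng : ∀ i ∈ a, i + 1 < n)
    (ha_len : a.length = n.choose 2)
    (ha_prod : (a.map (sgen n)).prod = (Fin.revPerm : Equiv.Perm (Fin n))) :
    IsGreatest {m : ℕ | ∃ bw : List ℕ, bw.Sublist a ∧ (bw.map (sgen n)).prod = w ∧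
        bw.length = m}
      (n.choose 2 - (n - kappa ((Fin.revPerm : Equiv.Perm (Fin n)) * w))) := by
  classical
  have hrev2 : (Fin.revPerm : Perm (Fin n)) * Fin.revPerm = 1 := by
    ext z
    simp [Fin.rev_rev]
  have hrevinv : (Fin.revPerm : Perm (Fin n))⁻¹ = Fin.revPerm :=
    inv_eq_of_mul_eq_one_right hrev2
  set x : Perm (Fin n) := Fin.revPerm * w with hx
  have hupper : ∀ m ∈ {m : ℕ | ∃ bw : List ℕ, bw.Sublist a ∧ (bw.map (sgen n)).prod = w ∧
      bw.length = m}, m ≤ n.choose 2 - (n - kappa x) := by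
    rintro m ⟨bw, hsub, hprodw, rfl⟩
    have hdb := del_bound hsub ha_rng
    rw [hprodw, ha_prod] at hdb
    have hkeq : kappa (w⁻¹ * Fin.revPerm) = kappa x := by
      rw [← kappa_inv (w⁻¹ * Fin.revPerm), mul_inv_rev, inv_inv, hrevinv]
    rw [hkeq] at hdb
    omega
  constructor
  · obtain ⟨P, hPprod, hPlen, hPinv⟩ := exists_good_factorization (n - kappa x) x le_rfl
    have H : ∀ j (hj : j < P.length), (P.get ⟨j, hj⟩).1 < (P.get ⟨j, hj⟩).2 ∧
        ((a.map (sgen n)).prod * swapProd (P.take j)) (P.get ⟨j, hj⟩).2 <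
        ((a.map (sgen n)).prod * swapProd (P.take j)) (P.get ⟨j, hj⟩).1 := by
      intro j hj
      obtain ⟨h1, h2⟩ := hPinv j hj
      refine ⟨h1, ?_⟩
      rw [ha_prod]
      simp only [mul_apply, Fin.revPerm_apply]
      exact (Fin.rev_lt_rev).mpr h2
    obtain ⟨c, hsub, hlen, hprodc⟩ := subword_lemma P a ha_rng H
    have hcw : (c.map (sgen n)).prod = w := by
      rw [hprodc, ha_prod, hPprod, hx, ← mul_assoc, hrev2, one_mul]
    have hcm : c.length ≤ n.choose 2 - (n - kappa x) := hupper _ ⟨c, hsub, hcw, rfl⟩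
    have hka := kappa_le x
    have hfin : c.length = n.choose 2 - (n - kappa x) := by omega
    exact ⟨c, hsub, hcw, hfin⟩
  · exact fun m hm => hupper m hm
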